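/- Let A ∈ ℝ^{n×n} have rank n with SVD A = S_A Σ_A T_A^T, let H ∈ ℝ^{n×r} with r ≤ n, and set Ĥ = T_A^T H. Then for every l ≤ n and every j, σ_j(AH) ≥ σ_l(A) · σ_j(Ĥ_{l,r}), where Ĥ_{l,r} is the l×r leading submatrix of Ĥ. -/

import Mathlib

open Matrix

/-- The `j`-th largest singular value (1-indexed) of a real matrix, defined as the square
root of the `j`-th largest eigenvalue of `AᴴA`; it is `0` for `j` out of range. -/
noncomputable def singularValue {m n : ℕ} (A : Matrix (Fin m) (Fin n) ℝ) (j : ℕ) : ℝ :=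
  if h : 1 ≤ j ∧ j ≤ n then
    Real.sqrt ((by simpa using Matrix.isHermitian_conjTranspose_mul_self A : (Aᵀ * A).IsHermitian).eigenvalues
      (Tuple.sort (by simpa using Matrix.isHermitian_conjTranspose_mul_self A : (Aᵀ * A).IsHermitian).eigenvalues ⟨n - j, by omega⟩))
  else 0

open scoped RealInnerProductSpace

namespace SVAux

variable {m : ℕ} {M : Matrix (Fin m) (Fin m) ℝ}

/-- ascending sorted eigenvalues -/
noncomputable def sortedEig (hM : M.IsHermitian) (k : Fin m) : ℝ :=
  hM.eigenvalues (Tuple.sort hM.eigenvalues k)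

lemma sortedEig_mono (hM : M.IsHermitian) : Monotone (sortedEig hM) :=
  Tuple.monotone_sort hM.eigenvalues

lemma toEuclideanLin_eigen (hM : M.IsHermitian) (i : Fin m) :
    Matrix.toEuclideanLin M (hM.eigenvectorBasis i) =
      hM.eigenvalues i • hM.eigenvectorBasis i := by
  apply (WithLp.equiv 2 (Fin m → ℝ)).injective
  show (Matrix.toEuclideanLin M _).ofLp = (hM.eigenvalues i • hM.eigenvectorBasis i).ofLp
  rw [ofLp_toEuclideanLin_apply, WithLp.ofLp_smul]
  exact hM.mulVec_eigenvectorBasis i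

lemma inner_toEuclideanLin_eq_sum (hM : M.IsHermitian) (x : EuclideanSpace ℝ (Fin m)) :
    ⟪x, Matrix.toEuclideanLin M x⟫ =
      ∑ i, hM.eigenvalues i * ⟪hM.eigenvectorBasis i, x⟫ ^ 2 := by
  set b := hM.eigenvectorBasis with hb
  have hx : ∑ i, ⟪b i, x⟫ • b i = x := b.sum_repr' x
  have hLx : Matrix.toEuclideanLin M x = ∑ i, ⟪b i, x⟫ • (hM.eigenvalues i • b i) := by
    conv_lhs => rw [← hx]
    rw [map_sum]
    refine Finset.sum_congr rfl fun i _ => ?_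
    rw [_root_.map_smul, toEuclideanLin_eigen hM i]
  rw [hLx, inner_sum]
  refine Finset.sum_congr rfl fun i _ => ?_
  rw [inner_smul_right, inner_smul_right, real_inner_comm x (b i)]
  ring

lemma inner_self_eq_sum (hM : M.IsHermitian) (x : EuclideanSpace ℝ (Fin m)) :
    ⟪x, x⟫ = ∑ i, ⟪hM.eigenvectorBasis i, x⟫ ^ 2 := by
  rw [← OrthonormalBasis.sum_inner_mul_inner hM.eigenvectorBasis x x]
  refine Finset.sum_congr rfl fun i _ => ?_
  rw [real_inner_comm x]; ring

lemma inner_eq_zero_of_mem_span (hM : M.IsHermitian) {s : Finset (Fin m)} {i : Fin m}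
    (hi : i ∉ s) {x : EuclideanSpace ℝ (Fin m)}
    (hx : x ∈ Submodule.span ℝ (hM.eigenvectorBasis '' ↑s)) :
    ⟪hM.eigenvectorBasis i, x⟫ = 0 := by
  induction hx using Submodule.span_induction with
  | mem y hy =>
      obtain ⟨j, hj, rfl⟩ := hy
      exact hM.eigenvectorBasis.orthonormal.2 (fun h : i = j => hi (h ▸ hj))
  | zero => exact inner_zero_right _
  | add y z _ _ hy hz => rw [inner_add_right, hy, hz, add_zero]
  | smul c y _ hy => rw [inner_smul_right, hy, mul_zero]

lemma card_le_finrank_span (hM : M.IsHermitian) (s : Finset (Fin m)) :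
    s.card ≤ Module.finrank ℝ (Submodule.span ℝ (hM.eigenvectorBasis '' ↑s)) := by
  set b := hM.eigenvectorBasis with hb
  have hli : LinearIndependent ℝ (fun i : s => b i) := by
    have h1 : LinearIndependent ℝ (⇑b) := by
      have := b.toBasis.linearIndependent
      rwa [OrthonormalBasis.coe_toBasis] at this
    exact h1.comp _ Subtype.coe_injective
  have hrange : b '' ↑s = Set.range (fun i : s => b i) := by
    exact (Set.image_eq_range b ↑s).trans rfl
  rw [hrange, finrank_span_eq_card hli, Fintype.card_coe]

lemma mul_inner_le_of_mem_span (hM : M.IsHermitian) {s : Finset (Fin m)} {t : ℝ}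
    (h : ∀ i ∈ s, t ≤ hM.eigenvalues i) {x : EuclideanSpace ℝ (Fin m)}
    (hx : x ∈ Submodule.span ℝ (hM.eigenvectorBasis '' ↑s)) :
    t * ⟪x, x⟫ ≤ ⟪x, Matrix.toEuclideanLin M x⟫ := by
  rw [inner_toEuclideanLin_eq_sum hM, inner_self_eq_sum hM, Finset.mul_sum]
  refine Finset.sum_le_sum fun i _ => ?_
  by_cases hi : i ∈ s
  · exact mul_le_mul_of_nonneg_right (h i hi) (sq_nonneg _)
  · rw [inner_eq_zero_of_mem_span hM hi hx]; simp

lemma inner_le_mul_of_mem_span (hM : M.IsHermitian) {s : Finset (Fin m)} {t : ℝ}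
    (h : ∀ i ∈ s, hM.eigenvalues i ≤ t) {x : EuclideanSpace ℝ (Fin m)}
    (hx : x ∈ Submodule.span ℝ (hM.eigenvectorBasis '' ↑s)) :
    ⟪x, Matrix.toEuclideanLin M x⟫ ≤ t * ⟪x, x⟫ := by
  rw [inner_toEuclideanLin_eq_sum hM, inner_self_eq_sum hM, Finset.mul_sum]
  refine Finset.sum_le_sum fun i _ => ?_
  by_cases hi : i ∈ s
  · exact mul_le_mul_of_nonneg_right (h i hi) (sq_nonneg _)
  · rw [inner_eq_zero_of_mem_span hM hi hx]; simp

lemma le_sortedEig (hM : M.IsHermitian) (k : Fin m) (t : ℝ)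
    (V : Submodule ℝ (EuclideanSpace ℝ (Fin m))) (hdim : m - k.1 ≤ Module.finrank ℝ V)
    (hq : ∀ x ∈ V, t * ⟪x, x⟫ ≤ ⟪x, Matrix.toEuclideanLin M x⟫) :
    t ≤ sortedEig hM k := by
  classical
  set b := hM.eigenvectorBasis with hb
  set s : Finset (Fin m) := (Finset.Iic k).image (Tuple.sort hM.eigenvalues) with hs
  have hcard : s.card = k.1 + 1 := by
    rw [hs, Finset.card_image_of_injective _ (Equiv.injective _), Fin.card_Iic]
  set W := Submodule.span ℝ (b '' ↑s) with hW
  have hWrank : k.1 + 1 ≤ Module.finrank ℝ W := hcard ▸ card_le_finrank_span hM s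
  have hsum := Submodule.finrank_sup_add_finrank_inf_eq V W
  have hle : Module.finrank ℝ ↥(V ⊔ W) ≤ m := by
    refine le_trans (Submodule.finrank_le _) ?_
    simp [finrank_euclideanSpace]
  have hpos : 0 < Module.finrank ℝ ↥(V ⊓ W) := by
    have hk := k.2
    omega
  have hnt : Nontrivial ↥(V ⊓ W) := Module.finrank_pos_iff.mp hpos
  obtain ⟨⟨x, hxmem⟩, hx0⟩ := exists_ne (0 : ↥(V ⊓ W))
  have hxne : x ≠ 0 := fun h => hx0 (Subtype.ext h)
  have h1 := hq x hxmem.1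
  have h2 : ⟪x, Matrix.toEuclideanLin M x⟫ ≤ sortedEig hM k * ⟪x, x⟫ := by
    refine inner_le_mul_of_mem_span hM ?_ hxmem.2
    intro i hi
    rw [hs, Finset.mem_image] at hi
    obtain ⟨k', hk', rfl⟩ := hi
    exact sortedEig_mono hM (Finset.mem_Iic.mp hk')
  have hxx : 0 < ⟪x, x⟫ := by
    rw [real_inner_self_eq_norm_sq]
    exact pow_pos (norm_pos_iff.mpr hxne) 2
  nlinarith

lemma exists_subspace_sortedEig (hM : M.IsHermitian) (k : Fin m) :
    ∃ V : Submodule ℝ (EuclideanSpace ℝ (Fin m)), m - k.1 ≤ Module.finrank ℝ V ∧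
      ∀ x ∈ V, sortedEig hM k * ⟪x, x⟫ ≤ ⟪x, Matrix.toEuclideanLin M x⟫ := by
  classical
  set b := hM.eigenvectorBasis with hb
  set s : Finset (Fin m) := (Finset.Ici k).image (Tuple.sort hM.eigenvalues) with hs
  have hcard : s.card = m - k.1 := by
    rw [hs, Finset.card_image_of_injective _ (Equiv.injective _), Fin.card_Ici]
  refine ⟨Submodule.span ℝ (b '' ↑s), hcard ▸ card_le_finrank_span hM s, fun x hx => ?_⟩
  refine mul_inner_le_of_mem_span hM ?_ hx
  intro i hi
  rw [hs, Finset.mem_image] at hi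
  obtain ⟨k', hk', rfl⟩ := hi
  exact sortedEig_mono hM (Finset.mem_Ici.mp hk')

lemma inner_toEuclideanLin_hermTMS {p q : ℕ} (N : Matrix (Fin p) (Fin q) ℝ)
    (x : EuclideanSpace ℝ (Fin q)) :
    ⟪x, Matrix.toEuclideanLin (Nᴴ * N) x⟫ =
      (N *ᵥ (WithLp.equiv 2 (Fin q → ℝ) x)) ⬝ᵥ (N *ᵥ (WithLp.equiv 2 (Fin q → ℝ) x)) := by
  rw [toEuclideanLin_apply, EuclideanSpace.inner_eq_star_dotProduct]
  simp only [Equiv.apply_symm_apply, star_trivial]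
  rw [dotProduct_comm, ← mulVec_mulVec, dotProduct_mulVec, conjTranspose_eq_transpose_of_trivial,
    vecMul_transpose]
  rfl

lemma singularValue_nonneg {p q : ℕ} (X : Matrix (Fin p) (Fin q) ℝ) (j : ℕ) :
    0 ≤ singularValue X j := by
  unfold singularValue
  split
  · exact Real.sqrt_nonneg _
  · exact le_refl 0

lemma singularValue_eq {p q : ℕ} (X : Matrix (Fin p) (Fin q) ℝ) {j : ℕ}
    (h1 : 1 ≤ j) (h2 : j ≤ q) :
    singularValue X j =
      Real.sqrt (sortedEig (by simpa using Matrix.isHermitian_conjTranspose_mul_self X : (Xᵀ * X).IsHermitian) ⟨q - j, by omega⟩) := by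
  rw [singularValue, dif_pos ⟨h1, h2⟩]
  rfl

lemma singularValue_antitone {p q : ℕ} (X : Matrix (Fin p) (Fin q) ℝ) {a b : ℕ}
    (h1 : 1 ≤ a) (hab : a ≤ b) (hb : b ≤ q) :
    singularValue X b ≤ singularValue X a := by
  rw [singularValue_eq X (le_trans h1 hab) hb, singularValue_eq X h1 (le_trans hab hb)]
  exact Real.sqrt_le_sqrt (sortedEig_mono _ (by simp only [Fin.mk_le_mk]; omega))

lemma key_quad {n r l : ℕ} (hl : l ≤ n) (S T : Matrix (Fin n) (Fin n) ℝ)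
    (hS : Sᵀ * S = 1) (d : Fin n → ℝ) (σ : ℝ) (hσd : ∀ i : Fin n, i.1 < l → σ ≤ d i)
    (hσ0 : 0 ≤ σ) (H : Matrix (Fin n) (Fin r) ℝ) (v : Fin r → ℝ) :
    σ ^ 2 * ((((Tᵀ * H).submatrix (Fin.castLE hl) id) *ᵥ v) ⬝ᵥ
        (((Tᵀ * H).submatrix (Fin.castLE hl) id) *ᵥ v)) ≤
      ((S * Matrix.diagonal d * Tᵀ * H) *ᵥ v) ⬝ᵥ ((S * Matrix.diagonal d * Tᵀ * H) *ᵥ v) := by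
  set y := (Tᵀ * H) *ᵥ v with hy
  have h1 : (S * Matrix.diagonal d * Tᵀ * H) *ᵥ v = S *ᵥ (Matrix.diagonal d *ᵥ y) := by
    rw [hy, mulVec_mulVec, mulVec_mulVec, Matrix.mul_assoc, Matrix.mul_assoc]
  have hSdot : ∀ w : Fin n → ℝ, (S *ᵥ w) ⬝ᵥ (S *ᵥ w) = w ⬝ᵥ w := by
    intro w
    calc (S *ᵥ w) ⬝ᵥ (S *ᵥ w) = (w ᵥ* Sᵀ) ⬝ᵥ (S *ᵥ w) := by rw [vecMul_transpose]
    _ = w ⬝ᵥ (Sᵀ *ᵥ (S *ᵥ w)) := (dotProduct_mulVec w Sᵀ (S *ᵥ w)).symm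
    _ = w ⬝ᵥ ((Sᵀ * S) *ᵥ w) := by rw [mulVec_mulVec]
    _ = w ⬝ᵥ w := by rw [hS, one_mulVec]
  have hCv : ((Tᵀ * H).submatrix (Fin.castLE hl) id) *ᵥ v
      = fun i : Fin l => y (Fin.castLE hl i) := rfl
  rw [h1, hSdot, hCv]
  simp only [dotProduct, mulVec_diagonal, Finset.mul_sum]
  have hstep1 : ∀ i : Fin l, σ ^ 2 * (y (Fin.castLE hl i) * y (Fin.castLE hl i)) ≤
      (d (Fin.castLE hl i) * y (Fin.castLE hl i)) * (d (Fin.castLE hl i) * y (Fin.castLE hl i)) := by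
    intro i
    have hd := hσd (Fin.castLE hl i) (by simpa using i.2)
    nlinarith [mul_nonneg (mul_nonneg (sub_nonneg.mpr hd)
      (by linarith : (0:ℝ) ≤ d (Fin.castLE hl i) + σ)) (mul_self_nonneg (y (Fin.castLE hl i)))]
  refine le_trans (Finset.sum_le_sum fun i _ => hstep1 i) ?_
  have hmap := Finset.sum_map Finset.univ (Fin.castLEEmb hl)
      (fun i : Fin n => (d i * y i) * (d i * y i))
  have hemb : ∀ i : Fin l, (Fin.castLEEmb hl) i = Fin.castLE hl i := fun i => rfl
  calc ∑ i : Fin l, (d (Fin.castLE hl i) * y (Fin.castLE hl i)) *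
        (d (Fin.castLE hl i) * y (Fin.castLE hl i))
      = ∑ i ∈ Finset.univ.map (Fin.castLEEmb hl), (d i * y i) * (d i * y i) := by
        rw [hmap]
        rfl
    _ ≤ ∑ i : Fin n, (d i * y i) * (d i * y i) :=
        Finset.sum_le_sum_of_subset_of_nonneg (Finset.subset_univ _)
          (fun i _ _ => mul_self_nonneg _)

end SVAux

/-- Let `A ∈ ℝ^{n×n}` be nonsingular with SVD `A = S Σ Tᵀ`, `H ∈ ℝ^{n×r}` with `r ≤ n`,
and `Ĥ = Tᵀ H`. Then for every `l ≤ n` and every `j`,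
`σ_j(A H) ≥ σ_l(A) · σ_j(Ĥ_{l,r})`, where `Ĥ_{l,r}` is the leading l×r submatrix of `Ĥ`. -/
theorem singularValue_mul_lower_bound
    {n r : ℕ} (hr : r ≤ n) (A : Matrix (Fin n) (Fin n) ℝ) (hA : IsUnit A.det)
    (S T : Matrix (Fin n) (Fin n) ℝ) (hS : Sᵀ * S = 1) (hT : Tᵀ * T = 1)
    (hSVD : A = S * Matrix.diagonal (fun i : Fin n => singularValue A (i.1 + 1)) * Tᵀ)
    (H : Matrix (Fin n) (Fin r) ℝ) (l : ℕ) (hl : l ≤ n) (j : ℕ) :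
    singularValue A l * singularValue ((Tᵀ * H).submatrix (Fin.castLE hl) id) j ≤
      singularValue (A * H) j := by
  classical
  by_cases hj : 1 ≤ j ∧ j ≤ r
  · obtain ⟨hj1, hj2⟩ := hj
    by_cases hl1 : 1 ≤ l
    · set σ := singularValue A l with hσdef
      have hσ0 : 0 ≤ σ := SVAux.singularValue_nonneg A l
      set d : Fin n → ℝ := fun i : Fin n => singularValue A (i.1 + 1) with hddef
      have hσd : ∀ i : Fin n, i.1 < l → σ ≤ d i := by
        intro i hi
        exact SVAux.singularValue_antitone A (by omega) (by omega : i.1 + 1 ≤ l) hl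
      have hAH : A * H = S * Matrix.diagonal d * Tᵀ * H := by rw [← hSVD]
      set C := (Tᵀ * H).submatrix (Fin.castLE hl) id with hCdef
      have key : ∀ v : Fin r → ℝ,
          σ ^ 2 * ((C *ᵥ v) ⬝ᵥ (C *ᵥ v)) ≤ ((A * H) *ᵥ v) ⬝ᵥ ((A * H) *ᵥ v) := by
        intro v
        rw [hAH, hCdef]
        exact SVAux.key_quad hl S T hS d σ hσd hσ0 H v
      set G := A * H with hGdef
      set k : Fin r := ⟨r - j, by omega⟩ with hk
      obtain ⟨V, hVdim, hVq⟩ :=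
        SVAux.exists_subspace_sortedEig (by simpa using Matrix.isHermitian_conjTranspose_mul_self C : (Cᵀ * C).IsHermitian) k
      have hstep : σ ^ 2 * SVAux.sortedEig (by simpa using Matrix.isHermitian_conjTranspose_mul_self C : (Cᵀ * C).IsHermitian) k ≤
          SVAux.sortedEig (by simpa using Matrix.isHermitian_conjTranspose_mul_self G : (Gᵀ * G).IsHermitian) k := by
        refine SVAux.le_sortedEig (by simpa using Matrix.isHermitian_conjTranspose_mul_self G : (Gᵀ * G).IsHermitian) k _ V hVdim ?_
        intro x hx
        have h1 := hVq x hx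
        rw [show ⟪x, toEuclideanLin (Cᵀ * C) x⟫ = _ from SVAux.inner_toEuclideanLin_hermTMS C x] at h1
        rw [show ⟪x, toEuclideanLin (Gᵀ * G) x⟫ = _ from SVAux.inner_toEuclideanLin_hermTMS G x]
        have h4 := key (WithLp.equiv 2 (Fin r → ℝ) x)
        calc σ ^ 2 * SVAux.sortedEig (by simpa using Matrix.isHermitian_conjTranspose_mul_self C : (Cᵀ * C).IsHermitian) k * ⟪x, x⟫
            = σ ^ 2 * (SVAux.sortedEig (by simpa using Matrix.isHermitian_conjTranspose_mul_self C : (Cᵀ * C).IsHermitian) k * ⟪x, x⟫) := by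
              ring
          _ ≤ σ ^ 2 * ((C *ᵥ (WithLp.equiv 2 (Fin r → ℝ) x)) ⬝ᵥ
                (C *ᵥ (WithLp.equiv 2 (Fin r → ℝ) x))) :=
              mul_le_mul_of_nonneg_left h1 (sq_nonneg σ)
          _ ≤ _ := h4
      have hfin : σ * Real.sqrt (SVAux.sortedEig (by simpa using Matrix.isHermitian_conjTranspose_mul_self C : (Cᵀ * C).IsHermitian) k) ≤
          Real.sqrt (SVAux.sortedEig (by simpa using Matrix.isHermitian_conjTranspose_mul_self G : (Gᵀ * G).IsHermitian) k) := by
        rw [← Real.sqrt_sq hσ0, ← Real.sqrt_mul (sq_nonneg σ)]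
        exact Real.sqrt_le_sqrt hstep
      rw [SVAux.singularValue_eq C hj1 hj2, SVAux.singularValue_eq G hj1 hj2]
      exact hfin
    · have h0 : singularValue A l = 0 := by
        unfold singularValue
        rw [dif_neg (fun h => hl1 h.1)]
      rw [h0, zero_mul]
      exact SVAux.singularValue_nonneg _ _
  · have h0 : singularValue ((Tᵀ * H).submatrix (Fin.castLE hl) id) j = 0 := by
      unfold singularValue
      rw [dif_neg hj]
    rw [h0, mul_zero]
    exact SVAux.singularValue_nonneg _ _
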